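/- Strict inequality λ₁ < λ*: Let H be a real Hilbert space compactly embedded in L^p(Ω) (p ≥ 1), with λ₁ = inf{‖u‖_H² : ‖u‖_{L^p} = 1} attained only at multiples of a function φ₁ with ‖φ₁‖_{L^p} = 1, and let W = {u ∈ H : ⟨φ₁, u⟩_H = 0}. Then λ* := inf{‖u‖_H² : u ∈ W, ‖u‖_{L^p} = 1} satisfies λ₁ < λ*. -/

import Mathlib

theorem stmt_11 {H E : Type*} [NormedAddCommGroup H] [InnerProductSpace ℝ H]
    [CompleteSpace H] [NormedAddCommGroup E] [NormedSpace ℝ E]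
    (j : H →L[ℝ] E) (hj : IsCompactOperator j)
    (φ₁ : H) (hφn : ‖j φ₁‖ = 1)
    (lam1 lamstar : ℝ)
    (hlam1 : lam1 = sInf {c : ℝ | ∃ u : H, ‖j u‖ = 1 ∧ c = ‖u‖ ^ 2})
    (hattained : ‖φ₁‖ ^ 2 = lam1)
    (hunique : ∀ u : H, ‖j u‖ = 1 → ‖u‖ ^ 2 = lam1 → ∃ t : ℝ, u = t • φ₁)
    (hlamstar : lamstar =
      sInf {c : ℝ | ∃ u : H, (inner ℝ φ₁ u : ℝ) = 0 ∧ ‖j u‖ = 1 ∧ c = ‖u‖ ^ 2})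
    (hne : ∃ u : H, (inner ℝ φ₁ u : ℝ) = 0 ∧ ‖j u‖ = 1) :
    lam1 < lamstar := by
  classical
  set S1 : Set ℝ := {c : ℝ | ∃ u : H, ‖j u‖ = 1 ∧ c = ‖u‖ ^ 2} with hS1def
  set Ss : Set ℝ := {c : ℝ | ∃ u : H, (inner ℝ φ₁ u : ℝ) = 0 ∧ ‖j u‖ = 1 ∧ c = ‖u‖ ^ 2}
    with hSsdef
  have hbdd1 : BddBelow S1 := ⟨0, by rintro c ⟨u, -, rfl⟩; positivity⟩
  have hbdds : BddBelow Ss := ⟨0, by rintro c ⟨u, -, -, rfl⟩; positivity⟩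
  obtain ⟨u₀, hu₀1, hu₀2⟩ := hne
  have hSsne : Ss.Nonempty := ⟨‖u₀‖ ^ 2, u₀, hu₀1, hu₀2, rfl⟩
  have hφ0 : φ₁ ≠ 0 := by
    intro h
    rw [h, map_zero, norm_zero] at hφn
    norm_num at hφn
  have hlam1pos : 0 < lam1 := by
    rw [← hattained]
    have : 0 < ‖φ₁‖ := norm_pos_iff.mpr hφ0
    positivity
  -- λ₁ ≤ λ*
  have hle : lam1 ≤ lamstar := by
    rw [hlam1, hlamstar]
    exact csInf_le_csInf hbdd1 hSsne (by rintro c ⟨u, -, h2, rfl⟩; exact ⟨u, h2, rfl⟩)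
  -- every admissible u in W has ‖u‖² ≥ λ*
  have key : ∀ u : H, (inner ℝ φ₁ u : ℝ) = 0 → ‖j u‖ = 1 → lamstar ≤ ‖u‖ ^ 2 := by
    intro u h1 h2
    rw [hlamstar]
    exact csInf_le hbdds ⟨u, h1, h2, rfl⟩
  -- scaling version
  have scale : ∀ w : H, (inner ℝ φ₁ w : ℝ) = 0 → 0 < ‖j w‖ →
      lamstar * ‖j w‖ ^ 2 ≤ ‖w‖ ^ 2 := by
    intro w hw hjw
    have h1 : (inner ℝ φ₁ ((‖j w‖⁻¹ : ℝ) • w) : ℝ) = 0 := by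
      rw [real_inner_smul_right, hw, mul_zero]
    have h2 : ‖j ((‖j w‖⁻¹ : ℝ) • w)‖ = 1 := by
      rw [map_smul, norm_smul, Real.norm_eq_abs, abs_of_pos (inv_pos.mpr hjw),
        inv_mul_cancel₀ hjw.ne']
    have h3 : lamstar ≤ (‖j w‖⁻¹ * ‖w‖) ^ 2 := by
      have := key _ h1 h2
      rwa [norm_smul, Real.norm_eq_abs, abs_of_pos (inv_pos.mpr hjw)] at this
    have h4 : (‖j w‖⁻¹ * ‖w‖) ^ 2 * ‖j w‖ ^ 2 = ‖w‖ ^ 2 := by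
      field_simp
    calc lamstar * ‖j w‖ ^ 2 ≤ (‖j w‖⁻¹ * ‖w‖) ^ 2 * ‖j w‖ ^ 2 :=
          mul_le_mul_of_nonneg_right h3 (sq_nonneg _)
      _ = ‖w‖ ^ 2 := h4
  by_contra hcon
  push_neg at hcon
  have heq : lamstar = lam1 := le_antisymm hcon hle
  have hlspos : 0 < lamstar := heq ▸ hlam1pos
  -- minimizing sequence
  have seq : ∀ n : ℕ, ∃ u : H, (inner ℝ φ₁ u : ℝ) = 0 ∧ ‖j u‖ = 1 ∧
      ‖u‖ ^ 2 < lamstar + 1 / (n + 1) := by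
    intro n
    have hpos : (0 : ℝ) < 1 / (n + 1) := by positivity
    have hlt : sInf Ss < lamstar + 1 / (n + 1) := by rw [← hlamstar]; linarith
    obtain ⟨c, hc, hclt⟩ := exists_lt_of_csInf_lt hSsne hlt
    obtain ⟨u, h1, h2, rfl⟩ := hc
    exact ⟨u, h1, h2, hclt⟩
  choose u hu1 hu2 hu3 using seq
  -- the sequence is bounded
  set R : ℝ := Real.sqrt (lamstar + 1) with hRdef
  have hub : ∀ n, u n ∈ Metric.closedBall (0 : H) R := by
    intro n
    rw [Metric.mem_closedBall, dist_zero_right]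
    have h1 : (1 : ℝ) / (n + 1) ≤ 1 := by
      rw [div_le_one (by positivity)]
      have : (0 : ℝ) ≤ n := Nat.cast_nonneg n
      linarith
    have h2 : ‖u n‖ ^ 2 ≤ lamstar + 1 := le_of_lt (lt_of_lt_of_le (hu3 n) (by linarith))
    exact Real.le_sqrt_of_sq_le h2
  -- compactness: extract a convergent subsequence of images
  have hK : IsCompact (closure ((⇑j) '' Metric.closedBall 0 R)) :=
    IsCompactOperator.isCompact_closure_image_closedBall (𝕜₁ := ℝ)
      (f := (j : H →ₗ[ℝ] E)) hj R
  have hmem : ∀ n, j (u n) ∈ closure ((⇑j) '' Metric.closedBall (0 : H) R) :=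
    fun n => subset_closure ⟨u n, hub n, rfl⟩
  obtain ⟨v, -, φ, hφmono, hconv⟩ := hK.tendsto_subseq hmem
  have hv1 : ‖v‖ = 1 := by
    have h1 : Filter.Tendsto (fun n => ‖j (u (φ n))‖) Filter.atTop (nhds ‖v‖) :=
      (continuous_norm.tendsto v).comp hconv
    have h2 : (fun n => ‖j (u (φ n))‖) = fun _ => (1 : ℝ) := funext fun n => hu2 _
    rw [h2] at h1
    exact tendsto_nhds_unique h1 tendsto_const_nhds
  -- Cauchy
  have hcauchy : CauchySeq (fun n => u (φ n)) := by
    rw [Metric.cauchySeq_iff]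
    intro ε hε
    set δ : ℝ := min (1 / 2) (ε ^ 2 / (32 * lamstar)) with hδdef
    have hδpos : 0 < δ := by
      apply lt_min (by norm_num)
      positivity
    have hδhalf : δ ≤ 1 / 2 := min_le_left _ _
    have hδs : δ ≤ ε ^ 2 / (32 * lamstar) := min_le_right _ _
    obtain ⟨N₁, hN₁⟩ := (Metric.tendsto_atTop.mp hconv) δ hδpos
    obtain ⟨N₂, hN₂⟩ := exists_nat_one_div_lt (K := ℝ) (show (0:ℝ) < ε ^ 2 / 8 by positivity)
    refine ⟨max N₁ N₂, ?_⟩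
    intro m hm n hn
    set a : H := u (φ m)
    set b : H := u (φ n)
    have hmN₁ : N₁ ≤ m := le_of_max_le_left hm
    have hnN₁ : N₁ ≤ n := le_of_max_le_left hn
    have hmN₂ : N₂ ≤ m := le_of_max_le_right hm
    have hnN₂ : N₂ ≤ n := le_of_max_le_right hn
    have hav : ‖j a - v‖ < δ := by
      have := hN₁ m hmN₁; rwa [dist_eq_norm] at this
    have hbv : ‖j b - v‖ < δ := by
      have := hN₁ n hnN₁; rwa [dist_eq_norm] at this
    -- bound on norms squared
    have haux : ∀ k : ℕ, N₂ ≤ k → ‖u (φ k)‖ ^ 2 < lamstar + ε ^ 2 / 8 := by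
      intro k hk
      have h1 : (1 : ℝ) / (φ k + 1) ≤ 1 / (k + 1) := by
        apply one_div_le_one_div_of_le (by positivity)
        have hk' : k ≤ φ k := hφmono.le_apply
        have : (k : ℝ) ≤ φ k := by exact_mod_cast hk'
        linarith
      have h2 : (1 : ℝ) / (k + 1) ≤ 1 / (N₂ + 1) := by
        apply one_div_le_one_div_of_le (by positivity)
        have : (N₂ : ℝ) ≤ k := by exact_mod_cast hk
        linarith
      have := hu3 (φ k)
      linarith
    have ha2 : ‖a‖ ^ 2 < lamstar + ε ^ 2 / 8 := haux m hmN₂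
    have hb2 : ‖b‖ ^ 2 < lamstar + ε ^ 2 / 8 := haux n hnN₂
    -- lower bound on ‖j (a + b)‖
    have hsum : ‖j (a + b)‖ ≥ 2 - 2 * δ := by
      have e1 : (2 : ℝ) • v = j (a + b) - ((j a - v) + (j b - v)) := by
        rw [map_add]; module
      have e2 : ‖(2 : ℝ) • v‖ = 2 := by
        rw [norm_smul, Real.norm_eq_abs, hv1]; norm_num
      have e3 : ‖(2 : ℝ) • v‖ ≤ ‖j (a + b)‖ + ‖(j a - v) + (j b - v)‖ := by
        rw [e1]; exact norm_sub_le _ _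
      have e4 : ‖(j a - v) + (j b - v)‖ ≤ ‖j a - v‖ + ‖j b - v‖ := norm_add_le _ _
      linarith [e2 ▸ e3]
    have hsumpos : 0 < ‖j (a + b)‖ := by linarith
    have hinner : (inner ℝ φ₁ (a + b) : ℝ) = 0 := by
      rw [inner_add_right, hu1, hu1, add_zero]
    have hsc : lamstar * ‖j (a + b)‖ ^ 2 ≤ ‖a + b‖ ^ 2 := scale _ hinner hsumpos
    -- parallelogram
    have hpar : ‖a - b‖ ^ 2 + ‖a + b‖ ^ 2 = 2 * ‖a‖ ^ 2 + 2 * ‖b‖ ^ 2 := by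
      have h1 := norm_add_sq_real a b
      have h2 := norm_sub_sq_real a b
      linarith
    have hsq : ‖a - b‖ ^ 2 < ε ^ 2 := by
      have hjs : (2 - 2 * δ) ^ 2 ≤ ‖j (a + b)‖ ^ 2 := by
        apply pow_le_pow_left₀ (by linarith) hsum 2
      have h5 : lamstar * (2 - 2 * δ) ^ 2 ≤ lamstar * ‖j (a + b)‖ ^ 2 :=
        mul_le_mul_of_nonneg_left hjs hlspos.le
      have hδb : 8 * δ * lamstar ≤ ε ^ 2 / 4 := by
        have h6 := mul_le_mul_of_nonneg_right hδs (by positivity : (0:ℝ) ≤ 32 * lamstar)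
        rw [div_mul_cancel₀ _ (by positivity : (32:ℝ) * lamstar ≠ 0)] at h6
        linarith
      have hexp : lamstar * (2 - 2 * δ) ^ 2
          = 4 * lamstar - 8 * δ * lamstar + 4 * δ ^ 2 * lamstar := by ring
      have hnn : 0 ≤ 4 * δ ^ 2 * lamstar := by positivity
      have hεpos : 0 < ε ^ 2 := by positivity
      linarith
    rw [dist_eq_norm]
    have : ‖a - b‖ < ε := by
      apply lt_of_pow_lt_pow_left₀ 2 hε.le hsq
    exact this
  -- limit
  obtain ⟨L, hL⟩ := cauchySeq_tendsto_of_complete hcauchy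
  have hjL : j L = v := by
    have h1 : Filter.Tendsto (fun n => j (u (φ n))) Filter.atTop (nhds (j L)) :=
      (j.continuous.tendsto L).comp hL
    exact tendsto_nhds_unique h1 hconv
  have hjL1 : ‖j L‖ = 1 := by rw [hjL, hv1]
  have hinnerL : (inner ℝ φ₁ L : ℝ) = 0 := by
    have h1 : Filter.Tendsto (fun n => (inner ℝ φ₁ (u (φ n)) : ℝ)) Filter.atTop
        (nhds (inner ℝ φ₁ L : ℝ)) :=
      ((Continuous.inner continuous_const continuous_id).tendsto L).comp hL
    have h2 : (fun n => (inner ℝ φ₁ (u (φ n)) : ℝ)) = fun _ => (0 : ℝ) :=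
      funext fun n => hu1 _
    rw [h2] at h1
    exact tendsto_nhds_unique h1 tendsto_const_nhds
  have hnormle : ‖L‖ ^ 2 ≤ lamstar := by
    have ht : Filter.Tendsto (fun n => ‖u (φ n)‖ ^ 2) Filter.atTop (nhds (‖L‖ ^ 2)) :=
      (hL.norm).pow 2
    have hg : Filter.Tendsto (fun n : ℕ => lamstar + 1 / (n + 1)) Filter.atTop
        (nhds lamstar) := by
      have := tendsto_one_div_add_atTop_nhds_zero_nat (𝕜 := ℝ)
      have h := Filter.Tendsto.add (tendsto_const_nhds (x := lamstar)
        (f := Filter.atTop (α := ℕ))) this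
      simpa using h
    apply le_of_tendsto_of_tendsto' ht hg
    intro n
    have h1 : (1 : ℝ) / (φ n + 1) ≤ 1 / (n + 1) := by
      apply one_div_le_one_div_of_le (by positivity)
      have hn' : n ≤ φ n := hφmono.le_apply
      have : (n : ℝ) ≤ φ n := by exact_mod_cast hn'
      linarith
    have := hu3 (φ n)
    linarith
  have hnormeq : ‖L‖ ^ 2 = lam1 := by
    have h1 := key L hinnerL hjL1
    linarith [heq ▸ hnormle, heq ▸ h1]
  obtain ⟨t, ht⟩ := hunique L hjL1 hnormeq
  have : t * ‖φ₁‖ ^ 2 = 0 := by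
    have := hinnerL
    rw [ht, real_inner_smul_right, real_inner_self_eq_norm_sq] at this
    linarith [this]
  have ht0 : t = 0 := by
    have hφsq : 0 < ‖φ₁‖ ^ 2 := pow_pos (norm_pos_iff.mpr hφ0) 2
    · rcases mul_eq_zero.mp this with h | h
      · exact h
      · exact absurd h (ne_of_gt hφsq)
  have : L = 0 := by rw [ht, ht0, zero_smul]
  rw [this, map_zero, norm_zero] at hjL1
  norm_num at hjL1
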